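/- For all natural numbers t and s with s ≤ t, the following binomial identity holds: ∑_{k=s}^{t} (1/(2^{2t} · (2s)!)) · C(2k, 2s) · C(2k, k) · C(2t−2k, t−k) = ∑_{i=0}^{2t−2s} (i! · (2t−2s−i)!/(2^{2s} · (2t)!)) · C(2t, t) · C(t, i)² · C(t, 2t−2s−i)². -/

import Mathlib

open Finset

namespace ZI

/-- trinomial revision, unconditional with truncation -/
lemma tr (n i v : ℕ) : n.choose (i + v) * (i + v).choose i = n.choose i * (n - i).choose v := by
  rcases le_or_gt (i + v) n with h | h
  · have h2 := Nat.choose_mul (n := n) (k := i + v) (s := i) (Nat.le_add_right i v)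
    simpa [Nat.add_sub_cancel_left] using h2
  · rw [Nat.choose_eq_zero_of_lt h, zero_mul]
    rcases le_or_gt i n with h2 | h2
    · rw [Nat.choose_eq_zero_of_lt (by omega : n - i < v), mul_zero]
    · rw [Nat.choose_eq_zero_of_lt h2, zero_mul]

/-- Vandermonde, range form -/
lemma vdm (m n k : ℕ) :
    (m + n).choose k = ∑ j ∈ range (k + 1), m.choose j * n.choose (k - j) := by
  rw [Nat.add_choose_eq]
  rw [Finset.Nat.sum_antidiagonal_eq_sum_range_succ (f := fun a b => m.choose a * n.choose b)]

/-- overlap/union expansion: C(k,i)·C(k,j) = ∑_u C(k,u)·C(u,i)·C(i,(i+j)-u) -/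
lemma ol (k i j : ℕ) :
    k.choose i * k.choose j
      = ∑ u ∈ range (i + j + 1), k.choose u * ((u.choose i) * i.choose (i + j - u)) := by
  have hz : ∀ u ∈ range (i + j + 1), u < i →
      k.choose u * ((u.choose i) * i.choose (i + j - u)) = 0 := by
    intro u _ hu
    rw [Nat.choose_eq_zero_of_lt hu]; ring
  -- drop the u < i part
  have hsplit : ∑ u ∈ range (i + j + 1), k.choose u * ((u.choose i) * i.choose (i + j - u))
      = ∑ u ∈ Ico i (i + j + 1), k.choose u * ((u.choose i) * i.choose (i + j - u)) := by
    rw [range_eq_Ico, ← Finset.sum_Ico_consecutive _ (Nat.zero_le i) (by omega : i ≤ i + j + 1)]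
    rw [Finset.sum_eq_zero (fun u hu => hz u (by simp at hu ⊢; omega) (by simp at hu; omega))]
    simp
  rw [hsplit, Finset.sum_Ico_eq_sum_range]
  have hlen : i + j + 1 - i = j + 1 := by omega
  rw [hlen]
  have hterm : ∀ v ∈ range (j + 1),
      k.choose (i + v) * ((i + v).choose i * i.choose (i + j - (i + v)))
        = k.choose i * ((k - i).choose v * i.choose (j - v)) := by
    intro v hv
    have h1 : i + j - (i + v) = j - v := by omega
    rw [h1, ← mul_assoc, tr k i v, mul_assoc]
  rw [Finset.sum_congr rfl hterm, ← Finset.mul_sum]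
  rcases le_or_gt i k with hik | hik
  · have : ∑ v ∈ range (j + 1), (k - i).choose v * i.choose (j - v) = k.choose j := by
      rw [← vdm (k - i) i j, Nat.sub_add_cancel hik]
    rw [this]
  · rw [Nat.choose_eq_zero_of_lt hik, zero_mul, zero_mul]


/-- ∑_p C(n,p)·C(p,m) = C(n,m)·2^(n-m) for m ≤ n -/
lemma sumY (n m : ℕ) (h : m ≤ n) :
    ∑ p ∈ range (n + 1), n.choose p * p.choose m = n.choose m * 2 ^ (n - m) := by
  have hz : ∀ p ∈ range (n + 1), p < m → n.choose p * p.choose m = 0 := by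
    intro p _ hp; rw [Nat.choose_eq_zero_of_lt hp, mul_zero]
  have hsplit : ∑ p ∈ range (n + 1), n.choose p * p.choose m
      = ∑ p ∈ Ico m (n + 1), n.choose p * p.choose m := by
    rw [range_eq_Ico, ← Finset.sum_Ico_consecutive _ (Nat.zero_le m) (by omega : m ≤ n + 1)]
    rw [Finset.sum_eq_zero (fun p hp => hz p (by simp at hp ⊢; omega) (by simp at hp; omega))]
    simp
  rw [hsplit, Finset.sum_Ico_eq_sum_range, (by omega : n + 1 - m = n - m + 1)]
  have hterm : ∀ v ∈ range (n - m + 1),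
      n.choose (m + v) * (m + v).choose m = n.choose m * (n - m).choose v := fun v _ => tr n m v
  rw [Finset.sum_congr rfl hterm, ← Finset.mul_sum, Nat.sum_range_choose]

/-- 2^(2s)·∑_j C(u,j)·C(j,2s-u) = 2^(2u)·C(u,2s-u) for u ≤ 2s -/
lemma sumX (s u : ℕ) (hu : u ≤ 2 * s) :
    2 ^ (2 * s) * ∑ j ∈ range (2 * s + 1), u.choose j * j.choose (2 * s - u)
      = 2 ^ (2 * u) * u.choose (2 * s - u) := by
  rcases le_or_gt s u with hsu | hsu
  · have hext : ∑ j ∈ range (2 * s + 1), u.choose j * j.choose (2 * s - u)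
        = ∑ j ∈ range (u + 1), u.choose j * j.choose (2 * s - u) := by
      rw [← Finset.sum_subset (Finset.range_subset_range.2 (by omega : u + 1 ≤ 2 * s + 1))]
      intro j _ hj
      rw [Nat.choose_eq_zero_of_lt (by simp at hj; omega), zero_mul]
    rw [hext, sumY u (2 * s - u) (by omega)]
    rw [← mul_assoc, mul_comm (2 ^ (2*s)) (u.choose (2*s-u)), mul_assoc, ← pow_add,
      (by omega : 2 * s + (u - (2 * s - u)) = 2 * u), mul_comm]
  · have h1 : u.choose (2 * s - u) = 0 := Nat.choose_eq_zero_of_lt (by omega)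
    have h2 : ∑ j ∈ range (2 * s + 1), u.choose j * j.choose (2 * s - u) = 0 := by
      apply Finset.sum_eq_zero
      intro j _
      rcases le_or_gt j u with hju | hju
      · rw [Nat.choose_eq_zero_of_lt (show j < 2 * s - u by omega), mul_zero]
      · rw [Nat.choose_eq_zero_of_lt hju, zero_mul]
    rw [h1, h2, mul_zero, mul_zero]

/-- ∑_j C(2s,j)·C(u,j)·C(j,2s-u) = C(2u,u)·C(u,2s-u) for u ≤ 2s -/
lemma sumG (s u : ℕ) (hu : u ≤ 2 * s) :
    ∑ j ∈ range (2 * s + 1), (2 * s).choose j * (u.choose j * j.choose (2 * s - u))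
      = (2 * u).choose u * u.choose (2 * s - u) := by
  rcases le_or_gt s u with hsu | hsu
  · have hz : ∀ j ∈ range (2 * s + 1), j < 2 * s - u →
        (2 * s).choose j * (u.choose j * j.choose (2 * s - u)) = 0 := by
      intro j _ hj; rw [Nat.choose_eq_zero_of_lt hj]; ring
    have hsplit : ∑ j ∈ range (2 * s + 1), (2 * s).choose j * (u.choose j * j.choose (2 * s - u))
        = ∑ j ∈ Ico (2 * s - u) (2 * s + 1), (2 * s).choose j * (u.choose j * j.choose (2 * s - u)) := by
      rw [range_eq_Ico, ← Finset.sum_Ico_consecutive _ (Nat.zero_le (2*s-u)) (by omega : 2*s-u ≤ 2 * s + 1)]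
      rw [Finset.sum_eq_zero (fun j hj => hz j (by simp at hj ⊢; omega) (by simp at hj; omega))]
      simp
    rw [hsplit, Finset.sum_Ico_eq_sum_range, (by omega : 2 * s + 1 - (2 * s - u) = u + 1)]
    have hterm : ∀ w ∈ range (u + 1),
        (2 * s).choose (2 * s - u + w) * (u.choose (2 * s - u + w) * (2 * s - u + w).choose (2 * s - u))
          = u.choose (2 * s - u) * ((u - (2 * s - u)).choose w * (2 * s).choose (u - w)) := by
      intro w hw
      have h1 : u.choose (2 * s - u + w) * (2 * s - u + w).choose (2 * s - u)
          = u.choose (2 * s - u) * (u - (2 * s - u)).choose w := tr u (2 * s - u) w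
      have h2 : (2 * s).choose (2 * s - u + w) = (2 * s).choose (u - w) := by
        have : u - w = 2 * s - (2 * s - u + w) := by simp at hw; omega
        rw [this, Nat.choose_symm (by simp at hw; omega)]
      rw [h2, h1]; ring
    rw [Finset.sum_congr rfl hterm, ← Finset.mul_sum]
    have : ∑ w ∈ range (u + 1), (u - (2 * s - u)).choose w * (2 * s).choose (u - w) = (2 * u).choose u := by
      rw [← vdm (u - (2 * s - u)) (2 * s) u, (by omega : u - (2 * s - u) + 2 * s = 2 * u)]
    rw [this, mul_comm]
  · have h1 : u.choose (2 * s - u) = 0 := Nat.choose_eq_zero_of_lt (by omega)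
    have h2 : ∑ j ∈ range (2 * s + 1), (2 * s).choose j * (u.choose j * j.choose (2 * s - u)) = 0 := by
      apply Finset.sum_eq_zero; intro j _
      rcases le_or_gt j u with hju | hju
      · rw [Nat.choose_eq_zero_of_lt (show j < 2 * s - u by omega)]; ring
      · rw [Nat.choose_eq_zero_of_lt hju]; ring
    rw [h1, h2]; ring


/-- abbreviation -/
def cb (n : ℕ) : ℕ := Nat.centralBinom n

def W (t q : ℕ) : ℕ := ∑ p ∈ Finset.HasAntidiagonal.antidiagonal t, p.1.choose q * (cb p.1 * cb p.2)

/-- the Zeilberger certificate per-term identity -/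
lemma star (q a b : ℕ) :
    (a + b + 1 - q) * (a.choose q) * cb a * cb (b + 1)
      + (a + 1 - q) * ((a + 1).choose q) * cb (a + 1) * cb b
    = 4 * (a + b + 1) * (a.choose q) * cb a * cb b
      + (a - q) * (a.choose q) * cb a * cb (b + 1) := by
  rcases le_or_gt q a with h | h
  · obtain ⟨d, rfl⟩ : ∃ d, a = q + d := ⟨a - q, by omega⟩
    rw [(by omega : q + d + b + 1 - q = d + b + 1), (by omega : q + d + 1 - q = d + 1),
      (by omega : q + d - q = d)]
    have ha := Nat.succ_mul_centralBinom_succ (q + d)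
    have hb := Nat.succ_mul_centralBinom_succ b
    have hq := Nat.choose_mul_succ_eq (q + d) q
    rw [(by omega : q + d + 1 - q = d + 1)] at hq
    apply Nat.eq_of_mul_eq_mul_left (show 0 < (q + d + 1) * (b + 1) by positivity)
    have ha' : ((q:ℤ) + d + 1) * cb (q + d + 1) = 2 * (2 * (q + d) + 1) * cb (q + d) := by
      exact_mod_cast ha
    have hb' : ((b:ℤ) + 1) * cb (b + 1) = 2 * (2 * b + 1) * cb b := by exact_mod_cast hb
    have hq' : ((q + d : ℕ).choose q : ℤ) * (q + d + 1) = ((q + d + 1 : ℕ).choose q : ℤ) * (d + 1) := by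
      exact_mod_cast hq
    zify
    linear_combination (((q:ℤ) + d + 1) * ((b:ℤ) + 1) * ((q+d:ℕ).choose q : ℤ) * (cb b : ℤ)) * ha'
      + (((q:ℤ) + d + 1) * ((b:ℤ) + 1) * ((q+d:ℕ).choose q : ℤ) * (cb (q+d) : ℤ)) * hb'
      - (((q:ℤ) + d + 1) * ((b:ℤ) + 1) * (cb (q + d + 1) : ℤ) * (cb b : ℤ)) * hq'
  · have h0 : a.choose q = 0 := Nat.choose_eq_zero_of_lt h
    have h2 : (a + 1 - q) * ((a + 1).choose q) = 0 := by
      rcases lt_or_ge (a + 1) q with h' | h'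
      · rw [Nat.choose_eq_zero_of_lt h', mul_zero]
      · rw [(by omega : a + 1 - q = 0), zero_mul]
    rw [h0, h2]; ring


lemma Wrec (t q : ℕ) : (t + 1 - q) * W (t + 1) q = 4 * (t + 1) * W t q := by
  classical
  set S1 := ∑ p ∈ Finset.HasAntidiagonal.antidiagonal t, p.1.choose q * (cb p.1 * cb (p.2 + 1)) with hS1def
  set S2 := ∑ p ∈ Finset.HasAntidiagonal.antidiagonal t,
      (p.1 + 1 - q) * ((p.1 + 1).choose q) * cb (p.1 + 1) * cb p.2 with hS2def
  set S3 := ∑ p ∈ Finset.HasAntidiagonal.antidiagonal t,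
      (p.1 - q) * (p.1.choose q) * cb p.1 * cb (p.2 + 1) with hS3def
  set Phi := ∑ p ∈ Finset.HasAntidiagonal.antidiagonal (t + 1),
      (p.1 - q) * (p.1.choose q) * cb p.1 * cb p.2 with hPhidef
  have hW : W (t + 1) q = (t + 1).choose q * (cb (t + 1) * cb 0) + S1 := by
    rw [W, Finset.Nat.sum_antidiagonal_succ' (f := fun p => p.1.choose q * (cb p.1 * cb p.2))]
  have hS2 : S2 = Phi := by
    rw [hPhidef, Finset.Nat.sum_antidiagonal_succ
      (f := fun p => (p.1 - q) * (p.1.choose q) * cb p.1 * cb p.2)]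
    simp [hS2def]
  have hS3 : Phi = (t + 1 - q) * ((t + 1).choose q) * cb (t + 1) * cb 0 + S3 := by
    rw [hPhidef, Finset.Nat.sum_antidiagonal_succ'
      (f := fun p => (p.1 - q) * (p.1.choose q) * cb p.1 * cb p.2)]
  have hmul1 : (t + 1 - q) * S1
      = ∑ p ∈ Finset.HasAntidiagonal.antidiagonal t, (t + 1 - q) * (p.1.choose q) * cb p.1 * cb (p.2 + 1) := by
    rw [hS1def, Finset.mul_sum]
    exact Finset.sum_congr rfl fun p _ => by ring
  have hmul2 : ∑ p ∈ Finset.HasAntidiagonal.antidiagonal t, 4 * (t + 1) * (p.1.choose q) * cb p.1 * cb p.2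
      = 4 * (t + 1) * W t q := by
    rw [W, Finset.mul_sum]
    exact Finset.sum_congr rfl fun p _ => by ring
  have hstar : ∑ p ∈ Finset.HasAntidiagonal.antidiagonal t,
        ((t + 1 - q) * (p.1.choose q) * cb p.1 * cb (p.2 + 1)
          + (p.1 + 1 - q) * ((p.1 + 1).choose q) * cb (p.1 + 1) * cb p.2)
      = ∑ p ∈ Finset.HasAntidiagonal.antidiagonal t,
        (4 * (t + 1) * (p.1.choose q) * cb p.1 * cb p.2
          + (p.1 - q) * (p.1.choose q) * cb p.1 * cb (p.2 + 1)) := by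
    apply Finset.sum_congr rfl
    intro p hp
    have hpt : p.1 + p.2 = t := Finset.HasAntidiagonal.mem_antidiagonal.mp hp
    have h := star q p.1 p.2
    rw [hpt] at h
    exact h
  apply Nat.add_right_cancel (m := S2)
  calc (t + 1 - q) * W (t + 1) q + S2
      = (t + 1 - q) * ((t + 1).choose q) * cb (t + 1) * cb 0 + ((t + 1 - q) * S1 + S2) := by
        rw [hW]; ring
    _ = (t + 1 - q) * ((t + 1).choose q) * cb (t + 1) * cb 0
          + ∑ p ∈ Finset.HasAntidiagonal.antidiagonal t,
            ((t + 1 - q) * (p.1.choose q) * cb p.1 * cb (p.2 + 1)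
              + (p.1 + 1 - q) * ((p.1 + 1).choose q) * cb (p.1 + 1) * cb p.2) := by
        rw [Finset.sum_add_distrib, ← hmul1, ← hS2def]
    _ = (t + 1 - q) * ((t + 1).choose q) * cb (t + 1) * cb 0
          + (4 * (t + 1) * W t q + S3) := by
        rw [hstar, Finset.sum_add_distrib, hmul2, ← hS3def]
    _ = 4 * (t + 1) * W t q + Phi := by rw [hS3]; ring
    _ = 4 * (t + 1) * W t q + S2 := by rw [hS2]

lemma Wval (t : ℕ) : ∀ q, 4 ^ q * W t q = 4 ^ t * ((2 * q).choose q * t.choose q) := by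
  induction t with
  | zero =>
    intro q
    have : W 0 q = (0 : ℕ).choose q := by
      rw [W]
      simp [Finset.Nat.antidiagonal_zero, cb]
    rw [this]
    cases q with
    | zero => simp
    | succ n => simp [Nat.choose_eq_zero_of_lt (Nat.succ_pos n)]
  | succ t ih =>
    intro q
    rcases lt_trichotomy q (t + 1) with hq | hq | hq
    · apply Nat.eq_of_mul_eq_mul_left (show 0 < t + 1 - q by omega)
      have hrec := Wrec t q
      calc (t + 1 - q) * (4 ^ q * W (t + 1) q)
          = 4 ^ q * ((t + 1 - q) * W (t + 1) q) := by ring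
        _ = 4 ^ q * (4 * (t + 1) * W t q) := by rw [hrec]
        _ = 4 * (t + 1) * (4 ^ q * W t q) := by ring
        _ = 4 * (t + 1) * (4 ^ t * ((2 * q).choose q * t.choose q)) := by rw [ih q]
        _ = 4 ^ (t + 1) * (2 * q).choose q * (t.choose q * (t + 1)) := by ring
        _ = 4 ^ (t + 1) * (2 * q).choose q * ((t + 1).choose q * (t + 1 - q)) := by
            rw [Nat.choose_mul_succ_eq]
        _ = (t + 1 - q) * (4 ^ (t + 1) * ((2 * q).choose q * (t + 1).choose q)) := by ring
    · subst hq
      have hW : W (t + 1) (t + 1) = cb (t + 1) := by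
        rw [W, Finset.sum_eq_single ((t + 1 : ℕ), (0 : ℕ))]
        · simp [cb]
        · intro p hp hne
          have h := Finset.HasAntidiagonal.mem_antidiagonal.mp hp
          have hlt : p.1 < t + 1 := by
            rcases Nat.lt_or_ge p.1 (t + 1) with h' | h'
            · exact h'
            · exfalso; apply hne
              have h1 : p.1 = t + 1 := by omega
              have h2 : p.2 = 0 := by omega
              exact Prod.ext h1 h2
          rw [Nat.choose_eq_zero_of_lt hlt, zero_mul]
        · intro h; exact absurd (Finset.HasAntidiagonal.mem_antidiagonal.mpr (by simp)) h
      rw [hW]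
      simp [cb, Nat.centralBinom]
    · have hW : W (t + 1) q = 0 := by
        apply Finset.sum_eq_zero
        intro p hp
        have h := Finset.HasAntidiagonal.mem_antidiagonal.mp hp
        rw [Nat.choose_eq_zero_of_lt (by omega : p.1 < q), zero_mul]
      rw [hW, Nat.choose_eq_zero_of_lt hq]
      simp


def A (t s : ℕ) : ℕ := ∑ p ∈ Finset.HasAntidiagonal.antidiagonal t, (2 * p.1).choose (2 * s) * (cb p.1 * cb p.2)

def D (t s : ℕ) : ℕ :=
  ∑ u ∈ range (2 * s + 1), t.choose u * ((2 * u).choose u * u.choose (2 * s - u))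

lemma h4pow (n : ℕ) : (4 : ℕ) ^ n = 2 ^ (2 * n) := by
  rw [pow_mul]; norm_num

lemma M1 (t s : ℕ) : 4 ^ s * A t s = 4 ^ t * D t s := by
  have step : A t s = ∑ j ∈ range (2 * s + 1), ∑ u ∈ range (2 * s + 1),
      (u.choose (2 * s - j) * (2 * s - j).choose (2 * s - u)) * W t u := by
    calc A t s
        = ∑ p ∈ Finset.HasAntidiagonal.antidiagonal t,
            (∑ j ∈ range (2 * s + 1), p.1.choose j * p.1.choose (2 * s - j))
              * (cb p.1 * cb p.2) := by
          simp only [A]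
          apply Finset.sum_congr rfl; intro p _
          rw [← vdm p.1 p.1 (2 * s), ← two_mul]
      _ = ∑ p ∈ Finset.HasAntidiagonal.antidiagonal t, ∑ j ∈ range (2 * s + 1), ∑ u ∈ range (2 * s + 1),
            (u.choose (2 * s - j) * (2 * s - j).choose (2 * s - u))
              * (p.1.choose u * (cb p.1 * cb p.2)) := by
          apply Finset.sum_congr rfl; intro p _
          rw [Finset.sum_mul]
          apply Finset.sum_congr rfl; intro j hj
          have hj' : j ≤ 2 * s := by
            have := Finset.mem_range.mp hj; omega
          have h := ol p.1 (2 * s - j) j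
          rw [(by omega : 2 * s - j + j = 2 * s)] at h
          rw [mul_comm (p.1.choose j) (p.1.choose (2 * s - j)), h, Finset.sum_mul]
          apply Finset.sum_congr rfl; intro u _
          ring
      _ = ∑ j ∈ range (2 * s + 1), ∑ u ∈ range (2 * s + 1),
            (u.choose (2 * s - j) * (2 * s - j).choose (2 * s - u)) * W t u := by
          rw [Finset.sum_comm]
          apply Finset.sum_congr rfl; intro j _
          rw [Finset.sum_comm]
          apply Finset.sum_congr rfl; intro u _
          rw [W, ← Finset.mul_sum]
  have step2 : A t s = ∑ u ∈ range (2 * s + 1),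
      (∑ j ∈ range (2 * s + 1), u.choose j * j.choose (2 * s - u)) * W t u := by
    rw [step, Finset.sum_comm]
    apply Finset.sum_congr rfl; intro u _
    rw [← Finset.sum_mul]
    congr 1
    exact Finset.sum_range_reflect (fun j => u.choose j * j.choose (2 * s - u)) (2 * s + 1)
  rw [step2]; simp only [D]; rw [Finset.mul_sum, Finset.mul_sum]
  apply Finset.sum_congr rfl
  intro u hu
  have hu' : u ≤ 2 * s := by have := Finset.mem_range.mp hu; omega
  have hx := sumX s u hu'
  have hw := Wval t u
  calc 4 ^ s * ((∑ j ∈ range (2 * s + 1), u.choose j * j.choose (2 * s - u)) * W t u)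
      = (2 ^ (2 * s) * ∑ j ∈ range (2 * s + 1), u.choose j * j.choose (2 * s - u)) * W t u := by
        rw [h4pow]; ring
    _ = (2 ^ (2 * u) * u.choose (2 * s - u)) * W t u := by rw [hx]
    _ = u.choose (2 * s - u) * (4 ^ u * W t u) := by rw [h4pow]; ring
    _ = u.choose (2 * s - u) * (4 ^ t * ((2 * u).choose u * t.choose u)) := by rw [hw]
    _ = 4 ^ t * (t.choose u * ((2 * u).choose u * u.choose (2 * s - u))) := by ring

lemma M4 (t s : ℕ) :
    ∑ j ∈ range (2 * s + 1), (2 * s).choose j * (t.choose j * t.choose (2 * s - j))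
      = D t s := by
  calc ∑ j ∈ range (2 * s + 1), (2 * s).choose j * (t.choose j * t.choose (2 * s - j))
      = ∑ j ∈ range (2 * s + 1), ∑ u ∈ range (2 * s + 1),
          t.choose u * ((2 * s).choose j * (u.choose j * j.choose (2 * s - u))) := by
        apply Finset.sum_congr rfl; intro j hj
        have hj' : j ≤ 2 * s := by have := Finset.mem_range.mp hj; omega
        have h := ol t j (2 * s - j)
        rw [(by omega : j + (2 * s - j) = 2 * s)] at h
        rw [h, Finset.mul_sum]
        apply Finset.sum_congr rfl; intro u _
        ring
    _ = ∑ u ∈ range (2 * s + 1), t.choose u *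
          (∑ j ∈ range (2 * s + 1), (2 * s).choose j * (u.choose j * j.choose (2 * s - u))) := by
        rw [Finset.sum_comm]
        apply Finset.sum_congr rfl; intro u _
        rw [← Finset.mul_sum]
    _ = D t s := by
        rw [D]
        apply Finset.sum_congr rfl; intro u hu
        rw [sumG s u (by have := Finset.mem_range.mp hu; omega)]


lemma M3 (t s : ℕ) (hst : s ≤ t) :
    ∑ i ∈ range (2 * t - 2 * s + 1),
        t.choose i * (t.choose (2 * t - 2 * s - i) * (2 * s).choose (t - i))
      = ∑ j ∈ range (2 * s + 1), (2 * s).choose j * (t.choose j * t.choose (2 * s - j)) := by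
  have hE : ∑ i ∈ range (2 * t - 2 * s + 1),
        t.choose i * (t.choose (2 * t - 2 * s - i) * (2 * s).choose (t - i))
      = ∑ i ∈ (range (2 * t - 2 * s + 1)).filter (fun i => 2 * t - 2 * s ≤ i + t ∧ i ≤ t),
        t.choose i * (t.choose (2 * t - 2 * s - i) * (2 * s).choose (t - i)) := by
    symm
    apply Finset.sum_filter_of_ne
    intro i hi hne
    have hi' : i ≤ 2 * t - 2 * s := by have := Finset.mem_range.mp hi; omega
    constructor
    · by_contra h
      exact hne (by rw [Nat.choose_eq_zero_of_lt (show t < 2 * t - 2 * s - i by omega)]; ring)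
    · by_contra h
      exact hne (by rw [Nat.choose_eq_zero_of_lt (show t < i by omega)]; ring)
  have hC : ∑ j ∈ range (2 * s + 1), (2 * s).choose j * (t.choose j * t.choose (2 * s - j))
      = ∑ j ∈ (range (2 * s + 1)).filter (fun j => j ≤ t ∧ 2 * s ≤ j + t),
        (2 * s).choose j * (t.choose j * t.choose (2 * s - j)) := by
    symm
    apply Finset.sum_filter_of_ne
    intro j hj hne
    have hj' : j ≤ 2 * s := by have := Finset.mem_range.mp hj; omega
    constructor
    · by_contra h
      exact hne (by rw [Nat.choose_eq_zero_of_lt (show t < j by omega)]; ring)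
    · by_contra h
      exact hne (by rw [Nat.choose_eq_zero_of_lt (show t < 2 * s - j by omega)]; ring)
  rw [hE, hC]
  apply Finset.sum_nbij' (fun i => t - i) (fun j => t - j)
  · intro i hi
    simp only [Finset.mem_filter, Finset.mem_range] at hi ⊢
    omega
  · intro j hj
    simp only [Finset.mem_filter, Finset.mem_range] at hj ⊢
    omega
  · intro i hi
    simp only [Finset.mem_filter, Finset.mem_range] at hi
    omega
  · intro j hj
    simp only [Finset.mem_filter, Finset.mem_range] at hj
    omega
  · intro i hi
    simp only [Finset.mem_filter, Finset.mem_range] at hi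
    obtain ⟨hi1, hi2, hi3⟩ := hi
    have e1 : t.choose (t - i) = t.choose i := Nat.choose_symm hi3
    have e2 : t.choose (2 * s - (t - i)) = t.choose (2 * t - 2 * s - i) := by
      have h' : 2 * t - 2 * s - i = t - (2 * s - (t - i)) := by omega
      rw [h', Nat.choose_symm (by omega)]
    rw [e1, e2]
    ring


lemma fterm (t s i : ℕ) (hst : s ≤ t) (hi : i ≤ 2 * t - 2 * s) :
    (2 * s).factorial * (i.factorial * (2 * t - 2 * s - i).factorial
        * (t.choose i) ^ 2 * (t.choose (2 * t - 2 * s - i)) ^ 2)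
      = t.factorial * t.factorial
        * (t.choose i * (t.choose (2 * t - 2 * s - i) * (2 * s).choose (t - i))) := by
  set m := 2 * t - 2 * s with hm
  rcases le_or_gt i t with hit | hit
  · rcases le_or_gt (m - i) t with hmt | hmt
    · have h1 := Nat.choose_mul_factorial_mul_factorial hit
      have h2 := Nat.choose_mul_factorial_mul_factorial hmt
      have h3 := Nat.choose_mul_factorial_mul_factorial (show t - i ≤ 2 * s by omega)
      have h4 : 2 * s - (t - i) = t - (m - i) := by omega
      rw [h4] at h3
      apply Nat.eq_of_mul_eq_mul_right
        (show 0 < (t - i).factorial * (t - (m - i)).factorial by positivity)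
      calc (2 * s).factorial * (i.factorial * (m - i).factorial
            * (t.choose i) ^ 2 * (t.choose (m - i)) ^ 2)
            * ((t - i).factorial * (t - (m - i)).factorial)
          = (2 * s).factorial * (t.choose i * i.factorial * (t - i).factorial)
              * (t.choose (m - i) * (m - i).factorial * (t - (m - i)).factorial)
              * (t.choose i * t.choose (m - i)) := by ring
        _ = (2 * s).factorial * t.factorial * t.factorial
              * (t.choose i * t.choose (m - i)) := by rw [h1, h2]
        _ = ((2 * s).choose (t - i) * (t - i).factorial * (t - (m - i)).factorial)
              * t.factorial * t.factorial * (t.choose i * t.choose (m - i)) := by rw [h3]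
        _ = t.factorial * t.factorial
              * (t.choose i * (t.choose (m - i) * (2 * s).choose (t - i)))
              * ((t - i).factorial * (t - (m - i)).factorial) := by ring
    · rw [Nat.choose_eq_zero_of_lt hmt]
      ring
  · rw [Nat.choose_eq_zero_of_lt hit]
    ring

lemma M2 (t s : ℕ) (hst : s ≤ t) :
    (2 * s).factorial * ∑ i ∈ range (2 * t - 2 * s + 1),
        i.factorial * (2 * t - 2 * s - i).factorial
          * (t.choose i) ^ 2 * (t.choose (2 * t - 2 * s - i)) ^ 2
      = t.factorial * t.factorial * ∑ i ∈ range (2 * t - 2 * s + 1),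
          t.choose i * (t.choose (2 * t - 2 * s - i) * (2 * s).choose (t - i)) := by
  rw [Finset.mul_sum, Finset.mul_sum]
  apply Finset.sum_congr rfl
  intro i hi
  exact fterm t s i hst (by have := Finset.mem_range.mp hi; omega)

theorem master (t s : ℕ) (hst : s ≤ t) :
    (∑ k ∈ Finset.Icc s t,
        (2 * k).choose (2 * s) * ((2 * k).choose k * (2 * t - 2 * k).choose (t - k)))
      * (2 ^ (2 * s) * (2 * t).factorial)
    = ((2 * t).choose t * ∑ i ∈ range (2 * t - 2 * s + 1),
        i.factorial * (2 * t - 2 * s - i).factorial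
          * (t.choose i) ^ 2 * (t.choose (2 * t - 2 * s - i)) ^ 2)
      * (2 ^ (2 * t) * (2 * s).factorial) := by
  have ha : ∑ k ∈ Finset.Icc s t,
      (2 * k).choose (2 * s) * ((2 * k).choose k * (2 * t - 2 * k).choose (t - k)) = A t s := by
    have h1 : A t s = ∑ k ∈ range (t + 1), (2 * k).choose (2 * s) * (cb k * cb (t - k)) := by
      rw [A]
      exact Finset.Nat.sum_antidiagonal_eq_sum_range_succ_mk
        (fun p => (2 * p.1).choose (2 * s) * (cb p.1 * cb p.2)) t
    rw [h1, range_eq_Ico]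
    rw [← Finset.sum_Ico_consecutive _ (Nat.zero_le s) (by omega : s ≤ t + 1)]
    have hzero : ∑ k ∈ Ico 0 s, (2 * k).choose (2 * s) * (cb k * cb (t - k)) = 0 := by
      apply Finset.sum_eq_zero
      intro k hk
      have : k < s := by simp at hk; omega
      rw [Nat.choose_eq_zero_of_lt (by omega : 2 * k < 2 * s), zero_mul]
    rw [hzero, zero_add]
    have : Finset.Icc s t = Finset.Ico s (t + 1) := by
      rw [Finset.Ico_add_one_right_eq_Icc]
    rw [this]
    apply Finset.sum_congr rfl
    intro k hk
    have hk' : k ≤ t := by simp at hk; omega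
    have e1 : (2 * t - 2 * k).choose (t - k) = cb (t - k) := by
      rw [cb, Nat.centralBinom_eq_two_mul_choose, (by omega : 2 * (t - k) = 2 * t - 2 * k)]
    have e2 : (2 * k).choose k = cb k := rfl
    rw [e1, e2]
  rw [ha]
  have hA : 2 ^ (2 * s) * A t s = 2 ^ (2 * t) * D t s := by
    have := M1 t s
    rwa [h4pow s, h4pow t] at this
  have hcb : (2 * t).choose t * (t.factorial * t.factorial) = (2 * t).factorial := by
    have h := Nat.choose_mul_factorial_mul_factorial (show t ≤ 2 * t by omega)
    rw [(by omega : 2 * t - t = t)] at h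
    rw [← h]; ring
  calc A t s * (2 ^ (2 * s) * (2 * t).factorial)
      = (2 ^ (2 * s) * A t s) * (2 * t).factorial := by ring
    _ = (2 ^ (2 * t) * D t s) * (2 * t).factorial := by rw [hA]
    _ = ((2 * t).choose t * (t.factorial * t.factorial)) * D t s * 2 ^ (2 * t) := by
        rw [hcb]; ring
    _ = (2 * t).choose t * (t.factorial * t.factorial * D t s) * 2 ^ (2 * t) := by ring
    _ = (2 * t).choose t * ((2 * s).factorial * ∑ i ∈ range (2 * t - 2 * s + 1),
          i.factorial * (2 * t - 2 * s - i).factorial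
            * (t.choose i) ^ 2 * (t.choose (2 * t - 2 * s - i)) ^ 2) * 2 ^ (2 * t) := by
        rw [← M4 t s, ← M3 t s hst, ← M2 t s hst]
    _ = ((2 * t).choose t * ∑ i ∈ range (2 * t - 2 * s + 1),
          i.factorial * (2 * t - 2 * s - i).factorial
            * (t.choose i) ^ 2 * (t.choose (2 * t - 2 * s - i)) ^ 2)
          * (2 ^ (2 * t) * (2 * s).factorial) := by ring


end ZI

/-- the binomial identity (even case `n = 2t`, `l = 2s`) proved via
Zeilberger's algorithm, with the convention `C(a,b) = 0` when `b > a`. -/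
theorem zeilberger_identity_even (t s : ℕ) (hst : s ≤ t) :
    (∑ k ∈ Finset.Icc s t,
      (1 / ((2 : ℝ) ^ (2 * t) * ((2 * s).factorial : ℝ))) *
        ((2 * k).choose (2 * s) : ℝ) * ((2 * k).choose k : ℝ) *
        ((2 * t - 2 * k).choose (t - k) : ℝ))
    = ∑ i ∈ Finset.range (2 * t - 2 * s + 1),
      (((i.factorial : ℝ) * ((2 * t - 2 * s - i).factorial : ℝ)) /
          ((2 : ℝ) ^ (2 * s) * ((2 * t).factorial : ℝ))) *
        ((2 * t).choose t : ℝ) * ((t.choose i : ℝ)) ^ 2 *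
        ((t.choose (2 * t - 2 * s - i) : ℝ)) ^ 2 := by
  have hd1 : (0 : ℝ) < (2 : ℝ) ^ (2 * t) * ((2 * s).factorial : ℝ) :=
    mul_pos (pow_pos two_pos _) (by exact_mod_cast Nat.factorial_pos _)
  have hd2 : (0 : ℝ) < (2 : ℝ) ^ (2 * s) * ((2 * t).factorial : ℝ) :=
    mul_pos (pow_pos two_pos _) (by exact_mod_cast Nat.factorial_pos _)
  have hL : (∑ k ∈ Finset.Icc s t,
      (1 / ((2 : ℝ) ^ (2 * t) * ((2 * s).factorial : ℝ))) *
        ((2 * k).choose (2 * s) : ℝ) * ((2 * k).choose k : ℝ) *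
        ((2 * t - 2 * k).choose (t - k) : ℝ))
      = ((∑ k ∈ Finset.Icc s t,
          (2 * k).choose (2 * s) * ((2 * k).choose k * (2 * t - 2 * k).choose (t - k)) : ℕ) : ℝ)
        / ((2 : ℝ) ^ (2 * t) * ((2 * s).factorial : ℝ)) := by
    rw [Nat.cast_sum, Finset.sum_div]
    apply Finset.sum_congr rfl
    intro k _
    push_cast
    ring
  have hR : (∑ i ∈ Finset.range (2 * t - 2 * s + 1),
      (((i.factorial : ℝ) * ((2 * t - 2 * s - i).factorial : ℝ)) /
          ((2 : ℝ) ^ (2 * s) * ((2 * t).factorial : ℝ))) *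
        ((2 * t).choose t : ℝ) * ((t.choose i : ℝ)) ^ 2 *
        ((t.choose (2 * t - 2 * s - i) : ℝ)) ^ 2)
      = (((2 * t).choose t * ∑ i ∈ Finset.range (2 * t - 2 * s + 1),
          i.factorial * (2 * t - 2 * s - i).factorial
            * (t.choose i) ^ 2 * (t.choose (2 * t - 2 * s - i)) ^ 2 : ℕ) : ℝ)
        / ((2 : ℝ) ^ (2 * s) * ((2 * t).factorial : ℝ)) := by
    rw [Nat.cast_mul, Nat.cast_sum, Finset.mul_sum, Finset.sum_div]
    apply Finset.sum_congr rfl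
    intro i _
    push_cast
    ring
  rw [hL, hR, div_eq_div_iff (ne_of_gt hd1) (ne_of_gt hd2)]
  have := ZI.master t s hst
  push_cast
  exact_mod_cast this
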